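/- Let F be a J-frame for a Krein space H with synthesis operator T. Then the kernel N(T) decomposes as the J-orthogonal direct sum N(T) = (N(T) ∩ ℓ²(I₊)) [∔] (N(T) ∩ ℓ²(I₋)); in particular N(T) is a regular subspace of the Krein space ℓ²(I) equipped with the indefinite product [x,y]₂ = Σ_{i∈I₊} x_i ȳ_i − Σ_{i∈I₋} x_i ȳ_i. -/

import Mathlib

noncomputable section

open scoped Classical

open Function

/-- The indefinite inner product `[x,y] = ⟨Jx, y⟩` induced by an operator `J`. -/
def kre {E : Type*} [NormedAddCommGroup E] [InnerProductSpace ℂ E]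
    (J : E →L[ℂ] E) (x y : E) : ℂ := @inner ℂ _ _ (J x) y

/-- `J` is a fundamental symmetry: a selfadjoint unitary (involutive) operator. -/
def IsFundSym {E : Type*} [NormedAddCommGroup E] [InnerProductSpace ℂ E] [CompleteSpace E]
    (J : E →L[ℂ] E) : Prop :=
  IsSelfAdjoint J ∧ J.comp J = ContinuousLinearMap.id ℂ E

/-- The J-orthogonal companion of a subspace. -/
def JorthCompanion {E : Type*} [NormedAddCommGroup E] [InnerProductSpace ℂ E]
    (J : E →L[ℂ] E) (S : Submodule ℂ E) : Submodule ℂ E where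
  carrier := {x | ∀ s ∈ S, kre J x s = 0}
  zero_mem' := by intro s hs; simp [kre]
  add_mem' := by
    intro a b ha hb s hs
    have h1 := ha s hs
    have h2 := hb s hs
    simp only [kre, map_add, inner_add_left] at h1 h2 ⊢
    rw [h1, h2, add_zero]
  smul_mem' := by
    intro c x hx s hs
    have h1 := hx s hs
    simp only [kre, map_smul, inner_smul_left] at h1 ⊢
    rw [h1, mul_zero]

/-- Uniformly J-positive subspace. -/
def UnifJPos {E : Type*} [NormedAddCommGroup E] [InnerProductSpace ℂ E]
    (J : E →L[ℂ] E) (S : Submodule ℂ E) : Prop :=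
  ∃ α : ℝ, 0 < α ∧ ∀ x ∈ S, α * ‖x‖ ^ 2 ≤ (kre J x x).re

/-- Uniformly J-negative subspace. -/
def UnifJNeg {E : Type*} [NormedAddCommGroup E] [InnerProductSpace ℂ E]
    (J : E →L[ℂ] E) (S : Submodule ℂ E) : Prop :=
  ∃ α : ℝ, 0 < α ∧ ∀ x ∈ S, (kre J x x).re ≤ -(α * ‖x‖ ^ 2)

/-- Maximal uniformly J-positive subspace. -/
def MaxUnifJPos {E : Type*} [NormedAddCommGroup E] [InnerProductSpace ℂ E]
    (J : E →L[ℂ] E) (S : Submodule ℂ E) : Prop :=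
  UnifJPos J S ∧ ∀ S' : Submodule ℂ E, UnifJPos J S' → S ≤ S' → S' = S

/-- Maximal uniformly J-negative subspace. -/
def MaxUnifJNeg {E : Type*} [NormedAddCommGroup E] [InnerProductSpace ℂ E]
    (J : E →L[ℂ] E) (S : Submodule ℂ E) : Prop :=
  UnifJNeg J S ∧ ∀ S' : Submodule ℂ E, UnifJNeg J S' → S ≤ S' → S' = S

/-- J-selfadjoint operator (with respect to the indefinite inner product of `J`). -/
def IsJSelfAdj {E : Type*} [NormedAddCommGroup E] [InnerProductSpace ℂ E]
    (J : E →L[ℂ] E) (A : E →L[ℂ] E) : Prop :=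
  ∀ x y : E, kre J (A x) y = kre J x (A y)

/-- The J-order: `A ≤_J B` iff `B - A` is J-positive. -/
def JLe {E : Type*} [NormedAddCommGroup E] [InnerProductSpace ℂ E]
    (J : E →L[ℂ] E) (A B : E →L[ℂ] E) : Prop :=
  ∀ x : E, 0 ≤ (kre J (B x - A x) x).re ∧ (kre J (B x - A x) x).im = 0

/-- The subspace of `ℓ²(I)` supported on a subset (given by a predicate) of `I`. -/
def suppSub {I : Type*} (A : I → Prop) : Submodule ℂ (lp (fun _ : I => ℂ) 2) where
  carrier := {x | ∀ i, ¬ A i → x i = 0}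
  zero_mem' := by intro i _; rfl
  add_mem' := by
    intro a b ha hb i hi
    have : (↑(a + b) : ∀ i, ℂ) i = a i + b i := by
      rw [lp.coeFn_add]; rfl
    simp [this, ha i hi, hb i hi]
  smul_mem' := by
    intro c x hx i hi
    have : (↑(c • x) : ∀ i, ℂ) i = c • x i := by
      rw [lp.coeFn_smul]; rfl
    simp [this, hx i hi]

variable {H : Type*} [NormedAddCommGroup H] [InnerProductSpace ℂ H] [CompleteSpace H]
variable {I : Type*} [DecidableEq I]

/-- `i` is a "positive index" for the family `f` w.r.t. `J`: `[f i, f i] ≥ 0`. -/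
def posIdx {H : Type*} [NormedAddCommGroup H] [InnerProductSpace ℂ H]
    (J : H →L[ℂ] H) (f : I → H) (i : I) : Prop := 0 ≤ (kre J (f i) (f i)).re

/-- The sign `σ_i = sgn [f i, f i]` (as a complex scalar, `+1` on `I₊` and `-1` on `I₋`). -/
def sgnv {H : Type*} [NormedAddCommGroup H] [InnerProductSpace ℂ H]
    (J : H →L[ℂ] H) (f : I → H) (i : I) : ℂ := if posIdx J f i then 1 else -1

/-- Closure of the span of the vectors of the family `h` with positive indices (signs taken
from the family `f`). -/
def posSpan {H : Type*} [NormedAddCommGroup H] [InnerProductSpace ℂ H]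
    (J : H →L[ℂ] H) (f h : I → H) : Submodule ℂ H :=
  (Submodule.span ℂ {x | ∃ i, posIdx J f i ∧ h i = x}).topologicalClosure

/-- Closure of the span of the vectors of the family `h` with negative indices. -/
def negSpan {H : Type*} [NormedAddCommGroup H] [InnerProductSpace ℂ H]
    (J : H →L[ℂ] H) (f h : I → H) : Submodule ℂ H :=
  (Submodule.span ℂ {x | ∃ i, ¬ posIdx J f i ∧ h i = x}).topologicalClosure

/-- A Bessel family in a Hilbert space. -/
def IsBessel {H : Type*} [NormedAddCommGroup H] [InnerProductSpace ℂ H]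
    (g : I → H) : Prop :=
  ∃ β : ℝ, ∀ (x : H) (s : Finset I),
    ∑ i ∈ s, ‖@inner ℂ _ _ (g i) x‖ ^ 2 ≤ β * ‖x‖ ^ 2

/-- `g` is a dual family for `f`: the signs coincide and the two indefinite
reconstruction formulas hold. -/
def IsDualFamily {H : Type*} [NormedAddCommGroup H] [InnerProductSpace ℂ H]
    (J : H →L[ℂ] H) (f g : I → H) : Prop :=
  (∀ i, Real.sign ((kre J (g i) (g i)).re) = Real.sign ((kre J (f i) (f i)).re)) ∧
  (∀ x : H, HasSum (fun i => (sgnv J f i * kre J x (f i)) • g i) x) ∧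
  (∀ x : H, HasSum (fun i => (sgnv J f i * kre J x (g i)) • f i) x)


/-- For a J-frame, `N(T)` decomposes as the J-orthogonal direct sum of
`N(T) ∩ ℓ²(I₊)` and `N(T) ∩ ℓ²(I₋)`; in particular `N(T)` is a regular subspace of the
Krein space `ℓ²(I)` (with fundamental symmetry `J₂ = P₊ - P₋`). -/
theorem jframe_kernel_decomposition
    (J : H →L[ℂ] H) (hJ : IsFundSym J) (f : I → H)
    (T : lp (fun _ : I => ℂ) 2 →L[ℂ] H)
    (hT : ∀ i, T (lp.single 2 i (1:ℂ)) = f i)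
    (hTsurj : Function.Surjective T)
    (Pp Pm : lp (fun _ : I => ℂ) 2 →L[ℂ] lp (fun _ : I => ℂ) 2)
    (hPp : ∀ (x : lp (fun _ : I => ℂ) 2) (i : I), Pp x i = if posIdx J f i then x i else 0)
    (hPm : ∀ (x : lp (fun _ : I => ℂ) 2) (i : I), Pm x i = if posIdx J f i then 0 else x i)
    (hJF : MaxUnifJPos J (LinearMap.range (T.comp Pp : lp (fun _ : I => ℂ) 2 →ₗ[ℂ] H)) ∧
      MaxUnifJNeg J (LinearMap.range (T.comp Pm : lp (fun _ : I => ℂ) 2 →ₗ[ℂ] H))) :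
    LinearMap.ker (T : lp (fun _ : I => ℂ) 2 →ₗ[ℂ] H) =
        (LinearMap.ker (T : lp (fun _ : I => ℂ) 2 →ₗ[ℂ] H) ⊓ suppSub (posIdx J f)) ⊔
          (LinearMap.ker (T : lp (fun _ : I => ℂ) 2 →ₗ[ℂ] H) ⊓ suppSub (fun i => ¬ posIdx J f i)) ∧
      (∀ x ∈ LinearMap.ker (T : lp (fun _ : I => ℂ) 2 →ₗ[ℂ] H) ⊓ suppSub (posIdx J f),
        ∀ y ∈ LinearMap.ker (T : lp (fun _ : I => ℂ) 2 →ₗ[ℂ] H) ⊓ suppSub (fun i => ¬ posIdx J f i),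
          kre (Pp - Pm) x y = 0) ∧
      IsCompl (LinearMap.ker (T : lp (fun _ : I => ℂ) 2 →ₗ[ℂ] H) : Submodule ℂ (lp (fun _ : I => ℂ) 2))
        (JorthCompanion (Pp - Pm) (LinearMap.ker (T : lp (fun _ : I => ℂ) 2 →ₗ[ℂ] H))) := by
    classical
  -- coordinate description of Pp x + Pm x and of (Pp - Pm) x
  have hsum : ∀ x : lp (fun _ : I => ℂ) 2, Pp x + Pm x = x := by
    intro x
    apply lp.ext
    funext i
    have h0 : (↑(Pp x + Pm x) : ∀ i, ℂ) i = Pp x i + Pm x i := by rw [lp.coeFn_add]; rfl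
    rw [h0, hPp, hPm]
    by_cases h : posIdx J f i <;> simp [h]
  have hJ2c : ∀ (x : lp (fun _ : I => ℂ) 2) (i : I),
      ((Pp - Pm) x : ∀ i, ℂ) i = if posIdx J f i then x i else -x i := by
    intro x i
    have h1 : (Pp - Pm) x = Pp x - Pm x := rfl
    have h2 : (↑(Pp x - Pm x) : ∀ i, ℂ) i = Pp x i - Pm x i := by rw [lp.coeFn_sub]; rfl
    rw [h1, h2, hPp, hPm]
    by_cases h : posIdx J f i <;> simp [h]
  -- key lemma: the kernel is invariant under Pp and Pm
  have key : ∀ x : lp (fun _ : I => ℂ) 2, T x = 0 → T (Pp x) = 0 ∧ T (Pm x) = 0 := by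
    intro x hx
    obtain ⟨⟨α, hα, hpos⟩, -⟩ := hJF.1
    obtain ⟨⟨β, hβ, hneg⟩, -⟩ := hJF.2
    have hadd : T (Pp x) + T (Pm x) = 0 := by rw [← map_add, hsum x]; exact hx
    have huv : T (Pp x) = -(T (Pm x)) := eq_neg_of_add_eq_zero_left hadd
    have hu : T (Pp x) ∈ LinearMap.range (T.comp Pp : lp (fun _ : I => ℂ) 2 →ₗ[ℂ] H) := ⟨x, rfl⟩
    have hv : T (Pm x) ∈ LinearMap.range (T.comp Pm : lp (fun _ : I => ℂ) 2 →ₗ[ℂ] H) := ⟨x, rfl⟩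
    have h1 := hpos _ hu
    have h2 := hneg _ hv
    have hkeq : kre J (T (Pp x)) (T (Pp x)) = kre J (T (Pm x)) (T (Pm x)) := by
      rw [huv]; simp [kre]
    have hn : ‖T (Pp x)‖ = ‖T (Pm x)‖ := by rw [huv, norm_neg]
    rw [hkeq, hn] at h1
    have h4 : ‖T (Pm x)‖ ^ 2 ≤ 0 := by nlinarith [sq_nonneg ‖T (Pm x)‖]
    have h6 : ‖T (Pm x)‖ ^ 2 = 0 := le_antisymm h4 (sq_nonneg _)
    have hz : ‖T (Pm x)‖ = 0 := pow_eq_zero_iff (by norm_num : 2 ≠ 0) |>.mp h6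
    have hv0 : T (Pm x) = 0 := norm_eq_zero.mp hz
    exact ⟨by rw [huv, hv0, neg_zero], hv0⟩
  have memP : ∀ x ∈ LinearMap.ker (T : lp (fun _ : I => ℂ) 2 →ₗ[ℂ] H),
      Pp x ∈ LinearMap.ker (T : lp (fun _ : I => ℂ) 2 →ₗ[ℂ] H) ⊓ suppSub (posIdx J f) := by
    intro x hx
    refine ⟨(key x (LinearMap.mem_ker.mp hx)).1, ?_⟩
    intro i hi
    rw [hPp, if_neg hi]
  have memM : ∀ x ∈ LinearMap.ker (T : lp (fun _ : I => ℂ) 2 →ₗ[ℂ] H),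
      Pm x ∈ LinearMap.ker (T : lp (fun _ : I => ℂ) 2 →ₗ[ℂ] H) ⊓ suppSub (fun i => ¬ posIdx J f i) := by
    intro x hx
    refine ⟨(key x (LinearMap.mem_ker.mp hx)).2, ?_⟩
    intro i hi
    rw [hPm, if_pos (not_not.mp hi)]
  -- the kernel is invariant under J₂ = Pp - Pm
  have hker2 : ∀ x ∈ LinearMap.ker (T : lp (fun _ : I => ℂ) 2 →ₗ[ℂ] H), (Pp - Pm) x ∈ LinearMap.ker (T : lp (fun _ : I => ℂ) 2 →ₗ[ℂ] H) := by
    intro x hx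
    have h := key x (LinearMap.mem_ker.mp hx)
    have : (Pp - Pm) x = Pp x - Pm x := rfl
    rw [LinearMap.mem_ker, this, map_sub, ContinuousLinearMap.coe_coe, h.1, h.2, sub_zero]
  -- J₂ is an involution
  have hinv : ∀ x : lp (fun _ : I => ℂ) 2, (Pp - Pm) ((Pp - Pm) x) = x := by
    intro x
    apply lp.ext
    funext i
    rw [hJ2c, hJ2c]
    by_cases h : posIdx J f i <;> simp [h]
  -- J₂ is selfadjoint
  have hsa : ∀ x y : lp (fun _ : I => ℂ) 2,
      (@inner ℂ _ _ ((Pp - Pm) x) y) = @inner ℂ _ _ x ((Pp - Pm) y) := by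
    intro x y
    rw [lp.inner_eq_tsum, lp.inner_eq_tsum]
    apply tsum_congr
    intro i
    rw [hJ2c, hJ2c]
    by_cases h : posIdx J f i <;> simp [h, inner_neg_left, inner_neg_right]
  refine ⟨?_, ?_, ?_⟩
  · apply le_antisymm
    · intro x hx
      have := Submodule.add_mem_sup (memP x hx) (memM x hx)
      rwa [hsum x] at this
    · exact sup_le inf_le_left inf_le_left
  · intro x hx y hy
    show (@inner ℂ _ _ ((Pp - Pm) x) y) = 0
    rw [lp.inner_eq_tsum]
    have hterm : ∀ i, (@inner ℂ _ _ (((Pp - Pm) x : ∀ i, ℂ) i) (y i)) = 0 := by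
      intro i
      by_cases h : posIdx J f i
      · rw [hy.2 i (not_not_intro h), inner_zero_right]
      · rw [hJ2c, if_neg h, hx.2 i h, neg_zero, inner_zero_left]
    exact (tsum_congr hterm).trans tsum_zero
  · have hcomp : JorthCompanion (Pp - Pm) (LinearMap.ker (T : lp (fun _ : I => ℂ) 2 →ₗ[ℂ] H)) = (LinearMap.ker (T : lp (fun _ : I => ℂ) 2 →ₗ[ℂ] H))ᗮ := by
      ext x
      constructor
      · intro hx
        have hx' : ∀ s ∈ LinearMap.ker (T : lp (fun _ : I => ℂ) 2 →ₗ[ℂ] H), kre (Pp - Pm) x s = 0 := hx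
        rw [Submodule.mem_orthogonal']
        intro s hs
        have h0 : (@inner ℂ _ _ ((Pp - Pm) x) ((Pp - Pm) s)) = 0 :=
          hx' ((Pp - Pm) s) (hker2 s hs)
        calc (@inner ℂ _ _ x s) = @inner ℂ _ _ ((Pp - Pm) x) ((Pp - Pm) s) := by
              rw [hsa, hinv]
          _ = 0 := h0
      · intro hx s hs
        show (@inner ℂ _ _ ((Pp - Pm) x) s) = 0
        rw [hsa]
        exact (Submodule.mem_orthogonal' _ _).mp hx ((Pp - Pm) s) (hker2 s hs)
    rw [hcomp]
    exact Submodule.isCompl_orthogonal_of_hasOrthogonalProjection
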